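/- arXiv:1902.01016 — 5 statements merged into one kernel-verified Lean document; each statement's English description precedes it below -/
import Mathlib

section
/- Let p > 1 and S > 0 be real numbers, set y_C = S^{−2(p+1)/(p−1)}, and define G(y) = y − S^{p+1} · y^{(p+1)/2} for y ≥ 0. Then there exists a constant C > 0 such that G(y) ≥ C · min{y, y_C − y} for every y ∈ (0, y_C). -/
open Real Set

/-- For `p > 1`, `S > 0`, `y_C = S^{−2(p+1)/(p−1)}` and
`G(y) = y − S^{p+1}·y^{(p+1)/2}`, there is a constant `C > 0` such that
`G(y) ≥ C · min{y, y_C − y}` for every `y ∈ (0, y_C)`. -/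
theorem stmt_3 (p S : ℝ) (hp : 1 < p) (hS : 0 < S)
    (yC : ℝ) (hyC : yC = S ^ (-2 * (p + 1) / (p - 1)))
    (G : ℝ → ℝ)
    (hG : ∀ y : ℝ, 0 ≤ y → G y = y - S ^ (p + 1) * y ^ ((p + 1) / 2)) :
    ∃ C : ℝ, 0 < C ∧ ∀ y ∈ Ioo (0 : ℝ) yC, C * min y (yC - y) ≤ G y := by
  set q : ℝ := (p + 1) / 2 with hqdef
  have hq : 1 < q := by rw [hqdef]; linarith
  have hyCpos : 0 < yC := by rw [hyC]; exact rpow_pos_of_pos hS _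
  set a : ℝ := min (q - 1) 1 with hadef
  have ha0 : 0 < a := lt_min (by linarith) one_pos
  have ha1 : a ≤ 1 := min_le_right _ _
  have haq : a ≤ q - 1 := min_le_left _ _
  refine ⟨a / 2, by positivity, ?_⟩
  intro y hy
  obtain ⟨hy0, hyyC⟩ := hy
  rw [hG y hy0.le]
  -- S^(p+1) = yC^(1-q)
  have hSpow : S ^ (p + 1) = yC ^ (1 - q) := by
    rw [hyC, ← rpow_mul hS.le]
    congr 1
    have hp1 : p - 1 ≠ 0 := by intro h; linarith [sub_eq_zero.mp h]
    field_simp [hqdef]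
    ring
  set t : ℝ := y / yC with htdef
  have ht0 : 0 < t := div_pos hy0 hyCpos
  have ht1 : t < 1 := (div_lt_one hyCpos).mpr hyyC
  -- t^(q-1) ≤ t^a
  have h1 : t ^ (q - 1) ≤ t ^ a :=
    rpow_le_rpow_of_exponent_ge ht0 ht1.le haq
  -- t^a ≤ 1 + a*(t-1)
  have h2 : t ^ a ≤ 1 + a * (t - 1) := by
    have := rpow_one_add_le_one_add_mul_self (s := t - 1) (by linarith) ha0.le ha1
    simpa using this
  -- rewrite S^(p+1) * y^q = y * t^(q-1)
  have hrw : S ^ (p + 1) * y ^ q = y * t ^ (q - 1) := by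
    rw [hSpow, htdef, div_rpow hy0.le hyCpos.le]
    have e1 : yC ^ ((1:ℝ) - q) = (yC ^ (q - 1))⁻¹ := by
      rw [← rpow_neg hyCpos.le]; ring_nf
    have e2 : y ^ q = y * y ^ (q - 1) := by
      have h := Real.rpow_add hy0 1 (q - 1)
      rw [rpow_one] at h
      rw [← h]; ring_nf
    rw [e1, e2]; ring
  have hkey : y - S ^ (p + 1) * y ^ q ≥ a * y * (1 - t) := by
    rw [hrw]
    have : t ^ (q - 1) ≤ 1 - a * (1 - t) := by nlinarith
    nlinarith [hy0, this]
  have hmax : min y (yC - y) * (yC / 2) ≤ y * (yC - y) := by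
    rcases le_total y (yC - y) with h | h
    · rw [min_eq_left h]; nlinarith
    · rw [min_eq_right h]; nlinarith
  have h1t : 1 - t = (yC - y) / yC := by
    rw [htdef, eq_div_iff hyCpos.ne', sub_mul, div_mul_cancel₀ y hyCpos.ne', one_mul]
  calc a / 2 * min y (yC - y) = a * (min y (yC - y) * (yC / 2)) / yC := by
        field_simp
    _ ≤ a * (y * (yC - y)) / yC := by gcongr
    _ = a * y * (1 - t) := by rw [h1t]; field_simp
    _ ≤ y - S ^ (p + 1) * y ^ q := hkey
end

section
/- Let p > 1 and let a, b be real numbers with 0 < a < b. Set E = a/2 − b/(p+1), J = a − b, and m = ((p−1)/(2(p+1))) · a^{(p+1)/(p−1)} · b^{−2/(p−1)}. Then J < −(p+1)·(m − E). -/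
open Real

/-- For `p > 1` and `0 < a < b`, with `E = a/2 − b/(p+1)`, `J = a − b` and
`m = ((p−1)/(2(p+1)))·a^{(p+1)/(p−1)}·b^{−2/(p−1)}`, one has `J < −(p+1)·(m − E)`. -/
theorem stmt_5 (p a b : ℝ) (hp : 1 < p) (ha : 0 < a) (hab : a < b)
    (E J m : ℝ)
    (hE : E = a / 2 - b / (p + 1))
    (hJ : J = a - b)
    (hm : m = (p - 1) / (2 * (p + 1)) * a ^ ((p + 1) / (p - 1)) * b ^ (-2 / (p - 1))) :
    J < -(p + 1) * (m - E) := by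
  have hp1 : (0:ℝ) < p - 1 := by linarith
  have hb : (0:ℝ) < b := ha.trans hab
  have ht : (0:ℝ) < 2 / (p - 1) := by positivity
  have hsplit : (p + 1) / (p - 1) = 1 + 2 / (p - 1) := by
    field_simp; ring
  have h1 : a ^ ((p + 1) / (p - 1)) = a * a ^ (2 / (p - 1)) := by
    rw [hsplit, rpow_add ha, rpow_one]
  have h2 : b ^ (-2 / (p - 1)) = (b ^ (2 / (p - 1)))⁻¹ := by
    rw [show -2 / (p-1) = -(2/(p-1)) by ring, rpow_neg hb.le]
  have hlt : a ^ (2 / (p - 1)) < b ^ (2 / (p - 1)) :=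
    rpow_lt_rpow ha.le hab ht
  have hap : (0:ℝ) < a ^ (2 / (p - 1)) := rpow_pos_of_pos ha _
  have hbp : (0:ℝ) < b ^ (2 / (p - 1)) := rpow_pos_of_pos hb _
  have key : a ^ ((p + 1) / (p - 1)) * b ^ (-2 / (p - 1)) < a := by
    rw [h1, h2, mul_assoc]
    have hq : a ^ (2 / (p - 1)) * (b ^ (2 / (p - 1)))⁻¹ < 1 := by
      rw [← div_eq_mul_inv, div_lt_one hbp]; exact hlt
    nlinarith
  have hm' : (p + 1) * m < (p - 1) / 2 * a := by
    rw [hm]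
    have : (p - 1) / (2 * (p + 1)) * a ^ ((p + 1) / (p - 1)) * b ^ (-2 / (p - 1))
        = (p - 1) / (2 * (p + 1)) * (a ^ ((p + 1) / (p - 1)) * b ^ (-2 / (p - 1))) := by ring
    rw [this]
    have hpos : (0:ℝ) < (p - 1) / (2 * (p + 1)) := by positivity
    have := mul_lt_mul_of_pos_left key hpos
    calc (p + 1) * ((p - 1) / (2 * (p + 1)) * (a ^ ((p + 1) / (p - 1)) * b ^ (-2 / (p - 1))))
        < (p + 1) * ((p - 1) / (2 * (p + 1)) * a) := by
          apply mul_lt_mul_of_pos_left this (by linarith)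
      _ = (p - 1) / 2 * a := by field_simp
  rw [hE, hJ]
  have hp1' : p + 1 ≠ 0 := by linarith
  have : -(p + 1) * (m - (a / 2 - b / (p + 1))) = -(p+1)*m + (p+1)*a/2 - b := by
    field_simp; ring
  rw [this]
  linarith
end

section
/- Let α > 0, let T ∈ (0,∞], and let I : [0,T) → ℝ be twice differentiable with I(t) > 0 for all t ∈ [0,T), I′(0) > 0, and I″(t)·I(t) ≥ (1+α)·I′(t)² for all t ∈ (0,T). Set t̃ = I(0)/(α·I′(0)). Then I(t)^{−α} ≤ I(0)^{−α}·(1 − t/t̃) for every t ∈ [0,T), and consequently T ≤ t̃. -/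
open Set ENNReal

/-- Let `α > 0`, `T ∈ (0,∞]`, and let `I : [0,T) → ℝ` be twice differentiable
with `I(t) > 0` on `[0,T)`, `I′(0) > 0`, and `I″(t)·I(t) ≥ (1+α)·I′(t)²` on `(0,T)`.
With `t̃ = I(0)/(α·I′(0))`, one has `I(t)^{−α} ≤ I(0)^{−α}·(1 − t/t̃)` on `[0,T)`, and
consequently `T ≤ t̃`. Here `[0,T)` is encoded as
`{t : ℝ | 0 ≤ t ∧ ENNReal.ofReal t < T}` with `T : ℝ≥0∞`. -/
theorem stmt_9 (α : ℝ) (hα : 0 < α) (T : ℝ≥0∞) (hT : 0 < T)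
    (I I' I'' : ℝ → ℝ)
    (hpos : ∀ t : ℝ, 0 ≤ t → ENNReal.ofReal t < T → 0 < I t)
    (hI'0 : 0 < I' 0)
    (hI' : ∀ t ∈ {t : ℝ | 0 ≤ t ∧ ENNReal.ofReal t < T},
      HasDerivWithinAt I (I' t) {t : ℝ | 0 ≤ t ∧ ENNReal.ofReal t < T} t)
    (hI'' : ∀ t ∈ {t : ℝ | 0 ≤ t ∧ ENNReal.ofReal t < T},
      HasDerivWithinAt I' (I'' t) {t : ℝ | 0 ≤ t ∧ ENNReal.ofReal t < T} t)
    (hineq : ∀ t : ℝ, 0 < t → ENNReal.ofReal t < T → (1 + α) * I' t ^ 2 ≤ I'' t * I t) :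
    (∀ t : ℝ, 0 ≤ t → ENNReal.ofReal t < T →
      I t ^ (-α) ≤ I 0 ^ (-α) * (1 - t / (I 0 / (α * I' 0)))) ∧
    T ≤ ENNReal.ofReal (I 0 / (α * I' 0)) := by
  set s : Set ℝ := {t : ℝ | 0 ≤ t ∧ ENNReal.ofReal t < T} with hs
  have h0T : ENNReal.ofReal 0 < T := by simpa using hT
  have hI0pos : 0 < I 0 := hpos 0 le_rfl h0T
  have key : ∀ t : ℝ, 0 ≤ t → ENNReal.ofReal t < T →
      I t ^ (-α) ≤ I 0 ^ (-α) * (1 - t / (I 0 / (α * I' 0))) := by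
    intro t ht0 htT
    -- choose b > t with ofReal b < T
    obtain ⟨b, htb, hbT⟩ : ∃ b, t < b ∧ ENNReal.ofReal b < T := by
      rcases eq_or_ne T ⊤ with h | h
      · exact ⟨t + 1, by linarith, by simp [h]⟩
      · have hTr : 0 < T.toReal := ENNReal.toReal_pos hT.ne' h
        have ht' : t < T.toReal := by
          rw [← ENNReal.ofReal_toReal h] at htT
          exact (ENNReal.ofReal_lt_ofReal_iff_of_nonneg ht0).mp htT
        refine ⟨(t + T.toReal) / 2, by linarith, ?_⟩
        calc ENNReal.ofReal ((t + T.toReal) / 2) < ENNReal.ofReal T.toReal :=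
              (ENNReal.ofReal_lt_ofReal_iff hTr).mpr (by linarith)
          _ ≤ T := ENNReal.ofReal_toReal_le
    have hsub : Ico 0 b ⊆ s := fun x hx =>
      ⟨hx.1, lt_of_le_of_lt (ENNReal.ofReal_le_ofReal hx.2.le) hbT⟩
    have mem_s : ∀ x ∈ Icc 0 t, x ∈ s := fun x hx =>
      hsub ⟨hx.1, lt_of_le_of_lt hx.2 htb⟩
    have hIpos : ∀ x ∈ Icc 0 t, 0 < I x := fun x hx =>
      hpos x (mem_s x hx).1 (mem_s x hx).2
    have hnhds : ∀ x ∈ Ioo 0 t, s ∈ nhds x := fun x hx =>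
      Filter.mem_of_superset (Ioo_mem_nhds hx.1 (hx.2.trans htb))
        (fun y hy => hsub ⟨hy.1.le, hy.2⟩)
    have hIccs : Icc 0 t ⊆ s := fun x hx => mem_s x hx
    -- first derivative of J = I ^ (-α)
    set Jd : ℝ → ℝ := fun x => I' x * (-α) * I x ^ (-α - 1) with hJd
    have hJ : ∀ x ∈ Icc 0 t, HasDerivWithinAt (fun y => I y ^ (-α)) (Jd x) (Icc 0 t) x := by
      intro x hx
      have := ((hI' x (mem_s x hx)).mono hIccs).rpow_const (p := -α)
        (Or.inl (hIpos x hx).ne')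
      simpa [hJd, neg_sub] using this
    -- HasDerivAt versions on the interior
    have hIat : ∀ x ∈ Ioo 0 t, HasDerivAt I (I' x) x := fun x hx =>
      (hI' x (mem_s x ⟨hx.1.le, hx.2.le⟩)).hasDerivAt (hnhds x hx)
    have hI'at : ∀ x ∈ Ioo 0 t, HasDerivAt I' (I'' x) x := fun x hx =>
      (hI'' x (mem_s x ⟨hx.1.le, hx.2.le⟩)).hasDerivAt (hnhds x hx)
    set Jdd : ℝ → ℝ := fun x =>
      I'' x * (-α) * I x ^ (-α - 1) + I' x * (-α) * (I' x * (-α - 1) * I x ^ (-α - 1 - 1))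
      with hJdd
    have hJdat : ∀ x ∈ Ioo 0 t, HasDerivAt Jd (Jdd x) x := by
      intro x hx
      have hne : I x ≠ 0 := (hIpos x ⟨hx.1.le, hx.2.le⟩).ne'
      exact ((hI'at x hx).mul_const (-α)).mul ((hIat x hx).rpow_const (Or.inl hne))
    have hJddle : ∀ x ∈ Ioo 0 t, Jdd x ≤ 0 := by
      intro x hx
      have hxm := mem_s x ⟨hx.1.le, hx.2.le⟩
      have hq := hineq x hx.1 hxm.2
      have hIx : 0 < I x := hIpos x ⟨hx.1.le, hx.2.le⟩
      have hZ : 0 < I x ^ (-α - 1 - 1) := Real.rpow_pos_of_pos hIx _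
      have hz : I x ^ (-α - 1) = I x ^ (-α - 1 - 1) * I x := by
        rw [← Real.rpow_add_one hIx.ne' (-α - 1 - 1)]
        congr 1; ring
      have : Jdd x = (-α) * I x ^ (-α - 1 - 1) * (I'' x * I x - (1 + α) * I' x ^ 2) := by
        simp only [hJdd, hz]; ring
      rw [this]
      have h1 : 0 ≤ I'' x * I x - (1 + α) * I' x ^ 2 := by linarith
      nlinarith [mul_nonneg (mul_nonneg hα.le hZ.le) h1]
    -- continuity
    have hIcont : ContinuousOn I (Icc 0 t) := fun x hx =>
      ((hI' x (mem_s x hx)).continuousWithinAt).mono hIccs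
    have hI'cont : ContinuousOn I' (Icc 0 t) := fun x hx =>
      ((hI'' x (mem_s x hx)).continuousWithinAt).mono hIccs
    have hJdcont : ContinuousOn Jd (Icc 0 t) :=
      (hI'cont.mul continuousOn_const).mul
        (hIcont.rpow_const fun x hx => Or.inl (hIpos x hx).ne')
    -- Jd is antitone on Icc 0 t
    have hanti : AntitoneOn Jd (Icc 0 t) := by
      apply antitoneOn_of_hasDerivWithinAt_nonpos (convex_Icc 0 t) hJdcont
        (f' := Jdd)
      · intro x hx
        rw [interior_Icc] at hx ⊢
        exact (hJdat x hx).hasDerivWithinAt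
      · intro x hx
        rw [interior_Icc] at hx
        exact hJddle x hx
    -- g x = x * Jd 0 - I x ^ (-α) is monotone on Icc 0 t
    have hmono : MonotoneOn (fun x => x * Jd 0 - I x ^ (-α)) (Icc 0 t) := by
      apply monotoneOn_of_hasDerivWithinAt_nonneg (convex_Icc 0 t)
        (f' := fun x => Jd 0 - Jd x)
      · exact fun x hx => ((continuousWithinAt_id.mul continuousWithinAt_const).sub
          (hJ x hx).continuousWithinAt)
      · intro x hx
        rw [interior_Icc] at hx
        have hx' : x ∈ Icc 0 t := ⟨hx.1.le, hx.2.le⟩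
        have := (((hasDerivWithinAt_id x (Icc 0 t)).mul_const (Jd 0)).sub (hJ x hx')).mono
          (interior_subset (s := Icc 0 t))
        rw [interior_Icc]
        rw [interior_Icc, one_mul] at this
        exact this
      · intro x hx
        rw [interior_Icc] at hx
        have := hanti (left_mem_Icc.mpr ht0) ⟨hx.1.le, hx.2.le⟩ hx.1.le
        linarith
    have hg := hmono (left_mem_Icc.mpr ht0) (right_mem_Icc.mpr ht0) ht0
    simp only [zero_mul, zero_sub] at hg
    -- hg : -(I 0 ^ (-α)) ≤ t * Jd 0 - I t ^ (-α)
    have hmain : I t ^ (-α) ≤ I 0 ^ (-α) + t * Jd 0 := by linarith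
    have h01 : I 0 ^ (-α - 1) = I 0 ^ (-α) / I 0 := by
      rw [show (-α - 1 : ℝ) = -α - 1 from rfl, Real.rpow_sub hI0pos, Real.rpow_one]
    calc I t ^ (-α) ≤ I 0 ^ (-α) + t * (I' 0 * (-α) * (I 0 ^ (-α) / I 0)) := by
          rw [← h01]; exact hmain
      _ = I 0 ^ (-α) * (1 - t / (I 0 / (α * I' 0))) := by
          field_simp
          ring
  refine ⟨key, ?_⟩
  by_contra h
  push_neg at h
  set c : ℝ := I 0 / (α * I' 0) with hc
  have hcpos : 0 < c := div_pos hI0pos (mul_pos hα hI'0)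
  have hkey := key c hcpos.le h
  rw [div_self hcpos.ne', sub_self, mul_zero] at hkey
  exact absurd hkey (not_le.mpr (Real.rpow_pos_of_pos (hpos c hcpos.le h) _))
end

section
/- Let p > 1, e₀ > 0 and M ≥ 0 be real numbers. Then there exist real numbers α > 0, ε > 0 and A > 0 such that for all real P ≥ 0 and Q ≥ 0: 2(p+1)·(e₀ + Q)·(P + A) − 4(1+α)(1+ε)·P·Q − (1+α)(1+ε⁻¹)·M > 0. -/
/-- For `p > 1`, `e₀ > 0`, `M ≥ 0`, there exist `α, ε, A > 0` such that
for all `P, Q ≥ 0`: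
`2(p+1)·(e₀ + Q)·(P + A) − 4(1+α)(1+ε)·P·Q − (1+α)(1+ε⁻¹)·M > 0`. -/
theorem stmt_10 (p e₀ M : ℝ) (hp : 1 < p) (he₀ : 0 < e₀) (hM : 0 ≤ M) :
    ∃ α ε A : ℝ, 0 < α ∧ 0 < ε ∧ 0 < A ∧
      ∀ P Q : ℝ, 0 ≤ P → 0 ≤ Q →
        0 < 2 * (p + 1) * (e₀ + Q) * (P + A)
            - 4 * (1 + α) * (1 + ε) * P * Q
            - (1 + α) * (1 + ε⁻¹) * M := by
  set δ : ℝ := min 1 ((p - 1) / 6) with hδdef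
  have hδpos : 0 < δ := lt_min one_pos (by linarith)
  have hδ1 : δ ≤ 1 := min_le_left _ _
  have hδ2 : δ ≤ (p - 1) / 6 := min_le_right _ _
  have hsq : 4 * (1 + δ) * (1 + δ) ≤ 2 * (p + 1) := by nlinarith
  set A : ℝ := ((1 + δ) * (1 + δ⁻¹) * M + 1) / (2 * (p + 1) * e₀) with hAdef
  have hden : 0 < 2 * (p + 1) * e₀ := by positivity
  have hnum : 0 < (1 + δ) * (1 + δ⁻¹) * M + 1 := by positivity
  have hApos : 0 < A := div_pos hnum hden
  have hAeq : 2 * (p + 1) * e₀ * A = (1 + δ) * (1 + δ⁻¹) * M + 1 := by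
    rw [hAdef]; field_simp
  refine ⟨δ, δ, A, hδpos, hδpos, hApos, fun P Q hP hQ => ?_⟩
  nlinarith [mul_nonneg hP hQ, mul_nonneg hP he₀.le, mul_nonneg hQ hApos.le,
    mul_nonneg (mul_nonneg hP hQ) hδpos.le,
    mul_nonneg (mul_nonneg (mul_nonneg hP hQ) hδpos.le) hδpos.le]
end

section
/- Let α be a real number with 0 ≤ α < 2. Then lim_{r→0⁺} sup_{x∈ℝ²} ∫_{{y∈ℝ² : |x−y|<r}} log(|x−y|^{−1})·|y|^{−α} dy = 0. Equivalently: for every ε > 0 there exists r₀ ∈ (0,1) such that for every r ∈ (0, r₀] and every x ∈ ℝ², ∫_{{y : |x−y|<r}} log(1/|x−y|)·|y|^{−α} dy < ε. -/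
open MeasureTheory Metric
open Set Filter

noncomputable section

private abbrev E2 := EuclideanSpace ℝ (Fin 2)

private lemma e2_meas_ball {r : ℝ} (hr : 0 ≤ r) :
    volume (ball (0:E2) r) = ENNReal.ofReal (r ^ 2) * volume (ball (0:E2) 1) := by
  rw [Measure.addHaar_ball _ _ hr, finrank_euclideanSpace_fin]

/-- `‖z‖ ^ (-p)` is integrable on the unit ball in `ℝ²` when `0 ≤ p < 2`. -/
private lemma aux_rpow_integrable {p : ℝ} (hp0 : 0 ≤ p) (hp : p < 2) :
    IntegrableOn (fun z : E2 => ‖z‖ ^ (-p)) (ball 0 1) volume := by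
  have hmeas : Measurable fun z : E2 => ‖z‖ ^ (-p) := measurable_norm.pow_const _
  refine ⟨hmeas.aestronglyMeasurable.restrict, ?_⟩
  rw [hasFiniteIntegral_iff_ofReal
    (ae_of_all _ fun z => Real.rpow_nonneg (norm_nonneg _) _)]
  set A : ℕ → Set E2 := fun n => ball 0 ((2:ℝ)⁻¹ ^ n) \ ball 0 ((2:ℝ)⁻¹ ^ (n+1)) with hA
  have hcover : ball (0:E2) 1 ⊆ {0} ∪ ⋃ n, A n := by
    intro z hz
    rcases eq_or_ne z 0 with rfl | hz0
    · exact Or.inl rfl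
    right
    have hz1 : ‖z‖ < 1 := mem_ball_zero_iff.1 hz
    have hzpos : 0 < ‖z‖ := norm_pos_iff.2 hz0
    have hex : ∃ n : ℕ, (2:ℝ)⁻¹ ^ n ≤ ‖z‖ := by
      obtain ⟨n, hn⟩ := exists_pow_lt_of_lt_one hzpos (by norm_num : (2:ℝ)⁻¹ < 1)
      exact ⟨n, hn.le⟩
    classical
    have hm0 : Nat.find hex ≠ 0 := by
      intro h
      have := Nat.find_spec hex
      rw [h, pow_zero] at this
      linarith
    obtain ⟨k, hk⟩ := Nat.exists_eq_succ_of_ne_zero hm0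
    refine mem_iUnion.2 ⟨k, ?_, ?_⟩
    · have := Nat.find_min hex (by omega : k < Nat.find hex)
      push_neg at this
      exact mem_ball_zero_iff.2 this
    · intro hmem
      have hzk : ‖z‖ < (2:ℝ)⁻¹ ^ (k+1) := mem_ball_zero_iff.1 hmem
      have := Nat.find_spec hex
      rw [hk, Nat.succ_eq_add_one] at this
      linarith
  have hgeom : ∀ n : ℕ, (((2:ℝ)⁻¹ ^ (n+1)) ^ (-p)) * ((2:ℝ)⁻¹ ^ n) ^ 2
      = (2:ℝ) ^ p * ((2:ℝ) ^ (p - 2)) ^ n := by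
    intro n
    have e1 : ∀ m : ℕ, ((2:ℝ)⁻¹ ^ m : ℝ) = (2:ℝ) ^ (-(m:ℝ)) := by
      intro m
      rw [inv_pow, ← Real.rpow_natCast 2 m, ← Real.rpow_neg (by norm_num)]
    rw [e1, e1, ← Real.rpow_natCast ((2:ℝ) ^ (p - 2)) n,
      ← Real.rpow_natCast ((2:ℝ) ^ (-((n:ℕ):ℝ))) 2,
      ← Real.rpow_mul (by norm_num : (0:ℝ) ≤ 2),
      ← Real.rpow_mul (by norm_num : (0:ℝ) ≤ 2),
      ← Real.rpow_mul (by norm_num : (0:ℝ) ≤ 2),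
      ← Real.rpow_add (by norm_num : (0:ℝ) < 2),
      ← Real.rpow_add (by norm_num : (0:ℝ) < 2)]
    congr 1
    push_cast
    ring
  have hAn : ∀ n : ℕ, (∫⁻ z in A n, ENNReal.ofReal (‖z‖ ^ (-p)))
      ≤ ENNReal.ofReal ((2:ℝ) ^ p * ((2:ℝ) ^ (p - 2)) ^ n) * volume (ball (0:E2) 1) := by
    intro n
    have hAmeas : MeasurableSet (A n) := measurableSet_ball.diff measurableSet_ball
    have hstep : ∀ z ∈ A n, ENNReal.ofReal (‖z‖ ^ (-p))
        ≤ ENNReal.ofReal (((2:ℝ)⁻¹ ^ (n+1)) ^ (-p)) := by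
      intro z hz
      apply ENNReal.ofReal_le_ofReal
      apply Real.rpow_le_rpow_of_nonpos (by positivity) ?_ (neg_nonpos.2 hp0)
      have := hz.2
      rw [mem_ball_zero_iff, not_lt] at this
      exact this
    calc (∫⁻ z in A n, ENNReal.ofReal (‖z‖ ^ (-p)))
        ≤ ∫⁻ _ in A n, ENNReal.ofReal (((2:ℝ)⁻¹ ^ (n+1)) ^ (-p)) :=
          setLIntegral_mono' hAmeas hstep
      _ = ENNReal.ofReal (((2:ℝ)⁻¹ ^ (n+1)) ^ (-p)) * volume (A n) := by
          rw [setLIntegral_const]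
      _ ≤ ENNReal.ofReal (((2:ℝ)⁻¹ ^ (n+1)) ^ (-p)) * volume (ball (0:E2) ((2:ℝ)⁻¹ ^ n)) := by
          gcongr
          exact diff_subset
      _ = ENNReal.ofReal ((2:ℝ) ^ p * ((2:ℝ) ^ (p - 2)) ^ n) * volume (ball (0:E2) 1) := by
          rw [e2_meas_ball (by positivity), ← mul_assoc,
            ← ENNReal.ofReal_mul (by positivity), hgeom]
  have hsum : (∑' n : ℕ, ENNReal.ofReal ((2:ℝ) ^ p * ((2:ℝ) ^ (p - 2)) ^ n)
      * volume (ball (0:E2) 1)) < ⊤ := by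
    have hc0 : (0:ℝ) ≤ (2:ℝ) ^ (p - 2) := Real.rpow_nonneg (by norm_num) _
    have hc1 : (2:ℝ) ^ (p - 2) < 1 :=
      Real.rpow_lt_one_of_one_lt_of_neg (by norm_num) (by linarith)
    have hterm : ∀ n : ℕ, ENNReal.ofReal ((2:ℝ) ^ p * ((2:ℝ) ^ (p - 2)) ^ n)
        * volume (ball (0:E2) 1)
        = (ENNReal.ofReal ((2:ℝ) ^ p) * volume (ball (0:E2) 1))
          * (ENNReal.ofReal ((2:ℝ) ^ (p - 2))) ^ n := by
      intro n
      rw [ENNReal.ofReal_mul (by positivity), ENNReal.ofReal_pow hc0]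
      ring
    rw [tsum_congr hterm, ENNReal.tsum_mul_left, ENNReal.tsum_geometric]
    apply ENNReal.mul_lt_top
    · exact ENNReal.mul_lt_top ENNReal.ofReal_lt_top measure_ball_lt_top
    · rw [ENNReal.inv_lt_top]
      exact tsub_pos_iff_lt.2 (ENNReal.ofReal_lt_one.2 hc1)
  calc (∫⁻ z in ball (0:E2) 1, ENNReal.ofReal (‖z‖ ^ (-p)))
      ≤ ∫⁻ z in ({0} ∪ ⋃ n, A n : Set E2), ENNReal.ofReal (‖z‖ ^ (-p)) :=
        lintegral_mono_set hcover
    _ ≤ (∫⁻ z in ({0} : Set E2), ENNReal.ofReal (‖z‖ ^ (-p)))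
        + ∫⁻ z in (⋃ n, A n : Set E2), ENNReal.ofReal (‖z‖ ^ (-p)) :=
        lintegral_union_le _ _ _
    _ ≤ 0 + ∑' n : ℕ, ∫⁻ z in A n, ENNReal.ofReal (‖z‖ ^ (-p)) := by
        gcongr
        · rw [setLIntegral_measure_zero _ _ (measure_singleton 0)]
        · exact lintegral_iUnion_le _ _
    _ ≤ 0 + ∑' n : ℕ, ENNReal.ofReal ((2:ℝ) ^ p * ((2:ℝ) ^ (p - 2)) ^ n)
        * volume (ball (0:E2) 1) := by
        gcongr with n
        exact hAn n
    _ < ⊤ := by simpa using hsum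

private def gfun (α : ℝ) (z : E2) : ℝ := Real.log (1/‖z‖) * ‖z‖ ^ (-α)

private lemma gfun_nonneg {α : ℝ} (hα0 : 0 ≤ α) {z : E2} (hz : ‖z‖ ≤ 1) : 0 ≤ gfun α z := by
  apply mul_nonneg _ (Real.rpow_nonneg (norm_nonneg _) _)
  rcases eq_or_lt_of_le (norm_nonneg z) with h0 | h0
  · rw [← h0]
    simp
  · exact Real.log_nonneg ((le_div_iff₀ h0).2 (by linarith))

private lemma gfun_le {α : ℝ} (hα0 : 0 ≤ α) (hα2 : α < 2) (z : E2) :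
    gfun α z ≤ (2/(2 - α)) * ‖z‖ ^ (-((2 + α)/2)) := by
  set s : ℝ := (2 - α)/2 with hs
  have hspos : 0 < s := by rw [hs]; linarith
  rcases eq_or_lt_of_le (norm_nonneg z) with h0 | h0
  · rw [gfun, ← h0]
    simp only [div_zero, Real.log_zero, zero_mul]
    exact mul_nonneg (div_nonneg (by norm_num) (by linarith)) (Real.rpow_nonneg le_rfl _)
  · have hlog : Real.log (1/‖z‖) ≤ s⁻¹ * ‖z‖ ^ (-s) := by
      have h1 : Real.log (1/‖z‖) = s⁻¹ * Real.log (‖z‖ ^ (-s)) := by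
        rw [Real.log_rpow h0, Real.log_div one_ne_zero (ne_of_gt h0), Real.log_one]
        field_simp
        ring
      rw [h1]
      have h2 : Real.log (‖z‖ ^ (-s)) ≤ ‖z‖ ^ (-s) := by
        have := Real.log_le_sub_one_of_pos (Real.rpow_pos_of_pos h0 (-s))
        linarith
      exact mul_le_mul_of_nonneg_left h2 (by positivity)
    have hmul : gfun α z ≤ s⁻¹ * ‖z‖ ^ (-s) * ‖z‖ ^ (-α) :=
      mul_le_mul_of_nonneg_right hlog (Real.rpow_nonneg (norm_nonneg _) _)
    have heq : s⁻¹ * ‖z‖ ^ (-s) * ‖z‖ ^ (-α) = (2/(2 - α)) * ‖z‖ ^ (-((2 + α)/2)) := by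
      rw [mul_assoc, ← Real.rpow_add h0]
      have h1 : s⁻¹ = 2/(2 - α) := by rw [hs]; field_simp
      have h2 : -s + -α = -((2 + α)/2) := by rw [hs]; ring
      rw [h1, h2]
    linarith [hmul, heq.le]

private lemma gfun_integrable {α : ℝ} (hα0 : 0 ≤ α) (hα2 : α < 2) :
    IntegrableOn (gfun α) (ball (0:E2) 1) volume := by
  have haux := aux_rpow_integrable (p := (2 + α)/2) (by linarith) (by linarith)
  have hmeas : Measurable (gfun α) :=
    (Real.measurable_log.comp (measurable_const.div measurable_norm)).mul
      (measurable_norm.pow_const _)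
  apply Integrable.mono' (haux.const_mul (2/(2 - α)))
  · exact hmeas.aestronglyMeasurable.restrict
  · filter_upwards [ae_restrict_mem measurableSet_ball] with z hz
    rw [Real.norm_of_nonneg (gfun_nonneg hα0 (mem_ball_zero_iff.1 hz).le)]
    exact gfun_le hα0 hα2 z

private lemma gfun_pointwise {α : ℝ} (hα0 : 0 ≤ α) {r : ℝ} (hr1 : r ≤ 1) (x : E2)
    {y : E2} (hy : y ∈ ball x r) :
    Real.log (1/‖x - y‖) * ‖y‖ ^ (-α)
      ≤ gfun α (x - y) + (ball (0:E2) r).indicator (gfun α) y := by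
  have hxy : ‖x - y‖ < r := by
    rw [mem_ball, dist_eq_norm] at hy
    rwa [norm_sub_rev]
  have hxy1 : ‖x - y‖ < 1 := lt_of_lt_of_le hxy hr1
  have hgxy : 0 ≤ gfun α (x - y) := gfun_nonneg hα0 hxy1.le
  have hind : 0 ≤ (ball (0:E2) r).indicator (gfun α) y :=
    Set.indicator_nonneg
      (fun z hz => gfun_nonneg hα0 (le_of_lt (lt_of_lt_of_le (mem_ball_zero_iff.1 hz) hr1))) y
  rcases le_or_gt ‖x - y‖ ‖y‖ with h1 | h2
  · have hkey : Real.log (1/‖x - y‖) * ‖y‖ ^ (-α) ≤ gfun α (x - y) := by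
      rcases eq_or_lt_of_le (norm_nonneg (x - y)) with h0 | h0
      · rw [gfun, ← h0]
        simp
      · have hlog : 0 ≤ Real.log (1/‖x - y‖) :=
          Real.log_nonneg ((le_div_iff₀ h0).2 (by linarith))
        have hrpow : ‖y‖ ^ (-α) ≤ ‖x - y‖ ^ (-α) :=
          Real.rpow_le_rpow_of_nonpos h0 h1 (neg_nonpos.2 hα0)
        exact mul_le_mul_of_nonneg_left hrpow hlog
    linarith
  · have hyr : y ∈ ball (0:E2) r := mem_ball_zero_iff.2 (h2.trans hxy)
    rw [Set.indicator_of_mem hyr]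
    have ht : 0 < ‖x - y‖ := lt_of_le_of_lt (norm_nonneg y) h2
    rcases eq_or_lt_of_le (norm_nonneg y) with h0 | h0
    · rcases eq_or_ne α 0 with rfl | hα
      · have hgy : 0 ≤ gfun 0 y := gfun_nonneg le_rfl (by rw [← h0]; norm_num)
        have : Real.log (1/‖x - y‖) * ‖y‖ ^ (-(0:ℝ)) = gfun 0 (x - y) := by
          rw [gfun, neg_zero, Real.rpow_zero, Real.rpow_zero]
        linarith [this.le]
      · rw [← h0, Real.zero_rpow (neg_ne_zero.2 hα), mul_zero]
        have hgy : 0 ≤ gfun α y := gfun_nonneg hα0 (by rw [← h0]; norm_num)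
        linarith
    · have hloglog : Real.log (1/‖x - y‖) ≤ Real.log (1/‖y‖) := by
        apply Real.log_le_log (by positivity)
        exact one_div_le_one_div_of_le h0 h2.le
      have : Real.log (1/‖x - y‖) * ‖y‖ ^ (-α) ≤ gfun α y :=
        mul_le_mul_of_nonneg_right hloglog (Real.rpow_nonneg (norm_nonneg _) _)
      linarith

end


/-- For `0 ≤ α < 2`,
`lim_{r→0⁺} sup_{x∈ℝ²} ∫_{|x−y|<r} log(|x−y|^{−1}) |y|^{−α} dy = 0`; equivalently, for every
`ε > 0` there is `r₀ ∈ (0,1)` such that for all `0 < r ≤ r₀` and all `x ∈ ℝ²`,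
`∫_{|x−y|<r} log(1/|x−y|) |y|^{−α} dy < ε`. -/
theorem stmt_15 (α : ℝ) (hα₀ : 0 ≤ α) (hα₂ : α < 2) :
    ∀ ε : ℝ, 0 < ε → ∃ r₀ : ℝ, 0 < r₀ ∧ r₀ < 1 ∧
      ∀ r : ℝ, 0 < r → r ≤ r₀ → ∀ x : EuclideanSpace ℝ (Fin 2),
        (∫ y in ball x r, Real.log (1 / ‖x - y‖) * ‖y‖ ^ (-α) ∂volume) < ε := by
  
  intro ε hε
  have hgint : IntegrableOn (gfun α) (ball (0:E2) 1) volume := gfun_integrable hα₀ hα₂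
  -- find r₀ with ∫ over ball 0 r₀ of gfun < ε/2
  have htend : Tendsto (fun n : ℕ => ∫ z in ball (0:E2) ((2:ℝ)⁻¹ ^ (n+1)), gfun α z ∂volume)
      atTop (nhds 0) := by
    have hsub : ∀ n : ℕ, ball (0:E2) ((2:ℝ)⁻¹ ^ (n+1)) ⊆ ball (0:E2) 1 :=
      fun n => ball_subset_ball (le_of_lt (pow_lt_one₀ (by norm_num) (by norm_num) (by omega)))
    have hμ : Tendsto (fun n : ℕ =>
        (volume.restrict (ball (0:E2) 1)) (ball (0:E2) ((2:ℝ)⁻¹ ^ (n+1)))) atTop (nhds 0) := by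
      have htr : Tendsto (fun n : ℕ => ((2:ℝ)⁻¹ ^ (n+1)) ^ 2) atTop (nhds 0) := by
        have h1 : Tendsto (fun n : ℕ => (2:ℝ)⁻¹ ^ (n+1)) atTop (nhds 0) :=
          (tendsto_pow_atTop_nhds_zero_of_lt_one (by norm_num) (by norm_num)).comp
            (tendsto_add_atTop_nat 1)
        have := h1.pow 2
        simpa using this
      have hvol : Tendsto (fun n : ℕ => volume (ball (0:E2) ((2:ℝ)⁻¹ ^ (n+1))))
          atTop (nhds 0) := by
        have heq : ∀ n : ℕ, volume (ball (0:E2) ((2:ℝ)⁻¹ ^ (n+1)))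
            = ENNReal.ofReal (((2:ℝ)⁻¹ ^ (n+1)) ^ 2) * volume (ball (0:E2) 1) := fun n =>
          e2_meas_ball (by positivity)
        rw [funext heq]
        have h2 : Tendsto (fun n : ℕ => ENNReal.ofReal (((2:ℝ)⁻¹ ^ (n+1)) ^ 2))
            atTop (nhds 0) := by
          have := ENNReal.tendsto_ofReal htr
          simpa using this
        have h3 := ENNReal.Tendsto.mul_const h2
          (Or.inr (measure_ball_lt_top : volume (ball (0:E2) 1) < ⊤).ne)
        simpa using h3
      exact tendsto_of_tendsto_of_tendsto_of_le_of_le tendsto_const_nhds hvol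
        (fun n => zero_le) (fun n => Measure.restrict_le_self _)
    have := hgint.tendsto_setIntegral_nhds_zero hμ
    have heq : ∀ n : ℕ, (∫ z in ball (0:E2) ((2:ℝ)⁻¹ ^ (n+1)), gfun α z
        ∂(volume.restrict (ball (0:E2) 1)))
        = ∫ z in ball (0:E2) ((2:ℝ)⁻¹ ^ (n+1)), gfun α z ∂volume := by
      intro n
      rw [Measure.restrict_restrict measurableSet_ball,
        Set.inter_eq_self_of_subset_left (hsub n)]
    rw [funext heq] at this
    exact this
  have hε2 : (0:ℝ) < ε/2 := by linarith
  obtain ⟨N, hN⟩ := (htend.eventually (gt_mem_nhds hε2)).exists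
  set r₀ : ℝ := (2:ℝ)⁻¹ ^ (N+1) with hr₀
  have hr₀pos : 0 < r₀ := by positivity
  have hr₀1 : r₀ < 1 := pow_lt_one₀ (by norm_num) (by norm_num) (by omega)
  refine ⟨r₀, hr₀pos, hr₀1, ?_⟩
  intro r hr hrr₀ x
  have hr1 : r < 1 := lt_of_le_of_lt hrr₀ hr₀1
  have hgr₀ : IntegrableOn (gfun α) (ball (0:E2) r₀) volume :=
    hgint.mono_set (ball_subset_ball hr₀1.le)
  have hgr : IntegrableOn (gfun α) (ball (0:E2) r) volume :=
    hgint.mono_set (ball_subset_ball hr1.le)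
  have hgnonneg : 0 ≤ᵐ[volume.restrict (ball (0:E2) r₀)] gfun α := by
    filter_upwards [ae_restrict_mem measurableSet_ball] with z hz
    exact gfun_nonneg hα₀ (le_of_lt (lt_trans (mem_ball_zero_iff.1 hz) hr₀1))
  by_cases hf : IntegrableOn (fun y : E2 => Real.log (1 / ‖x - y‖) * ‖y‖ ^ (-α))
      (ball x r) volume
  · -- measure-preserving change of variables
    have hmp : MeasurePreserving (fun y : E2 => x - y) volume volume :=
      Measure.measurePreserving_sub_left volume x
    have hemb : MeasurableEmbedding (fun y : E2 => x - y) :=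
      (MeasurableEquiv.subLeft x).measurableEmbedding
    have hpre : (fun y : E2 => x - y) ⁻¹' (ball (0:E2) r) = ball x r := by
      ext y
      rw [Set.mem_preimage, mem_ball_zero_iff, mem_ball, dist_eq_norm, norm_sub_rev]
    have part1 : IntegrableOn (fun y : E2 => gfun α (x - y)) (ball x r) volume := by
      have := (hmp.integrableOn_comp_preimage hemb (s := ball (0:E2) r)).2 hgr
      rwa [hpre] at this
    have part2 : IntegrableOn ((ball (0:E2) r).indicator (gfun α)) (ball x r) volume :=
      (hgr.integrable_indicator measurableSet_ball).integrableOn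
    have hmono : ∀ y ∈ ball x r, Real.log (1 / ‖x - y‖) * ‖y‖ ^ (-α)
        ≤ gfun α (x - y) + (ball (0:E2) r).indicator (gfun α) y :=
      fun y hy => gfun_pointwise hα₀ hr1.le x hy
    have h1 : (∫ y in ball x r, gfun α (x - y) ∂volume)
        ≤ ∫ z in ball (0:E2) r₀, gfun α z ∂volume := by
      have hcv : (∫ y in ball x r, gfun α (x - y) ∂volume)
          = ∫ z in ball (0:E2) r, gfun α z ∂volume := by
        rw [← hpre, hmp.setIntegral_preimage_emb hemb]
      rw [hcv]
      exact setIntegral_mono_set hgr₀ hgnonneg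
        ((ball_subset_ball hrr₀).eventuallyLE)
    have h2 : (∫ y in ball x r, (ball (0:E2) r).indicator (gfun α) y ∂volume)
        ≤ ∫ z in ball (0:E2) r₀, gfun α z ∂volume := by
      rw [setIntegral_indicator measurableSet_ball]
      exact setIntegral_mono_set hgr₀ hgnonneg
        ((Set.inter_subset_right.trans (ball_subset_ball hrr₀)).eventuallyLE)
    calc (∫ y in ball x r, Real.log (1 / ‖x - y‖) * ‖y‖ ^ (-α) ∂volume)
        ≤ ∫ y in ball x r, (gfun α (x - y) + (ball (0:E2) r).indicator (gfun α) y) ∂volume := by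
          apply setIntegral_mono_on hf (part1.add part2) measurableSet_ball
          intro y hy
          simpa using hmono y hy
      _ = (∫ y in ball x r, gfun α (x - y) ∂volume)
          + ∫ y in ball x r, (ball (0:E2) r).indicator (gfun α) y ∂volume :=
          integral_add part1 part2
      _ ≤ (∫ z in ball (0:E2) r₀, gfun α z ∂volume)
          + ∫ z in ball (0:E2) r₀, gfun α z ∂volume := add_le_add h1 h2
      _ < ε/2 + ε/2 := add_lt_add hN hN
      _ = ε := by ring
  · rw [integral_undef hf]
    exact hε
end
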